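/- arXiv:1406.5342 — 3 statements merged into one kernel-verified Lean document; each statement's English description precedes it below -/
import Mathlib

section
/- Given a 2-crossed module of Lie groups (L → H → G, ▷, {·,·}), the pair (L → H) with the induced action h ▷ ℓ := ℓ · {t(ℓ)⁻¹, h} forms a crossed module of groups; in particular t : L → H satisfies t(h ▷ ℓ) = h t(ℓ) h⁻¹ for all h ∈ H, ℓ ∈ L. -/
/-- Given a 2-crossed module of (Lie) groups `(L → H → G, ▷, {·,·})`,
the pair `(L → H)` with the induced action `h ▷ ℓ := ℓ * {t(ℓ)⁻¹, h}` forms a crossed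
module of groups; in particular `t : L → H` satisfies `t(h ▷ ℓ) = h * t ℓ * h⁻¹`. -/
theorem two_crossed_module_induced_crossed_module
    {G H L : Type*} [Group G] [Group H] [Group L]
    (tL : L →* H) (tH : H →* G)
    (actH : G →* MulAut H) (actL : G →* MulAut L)
    (br : H → H → L)
    -- normal complex
    (hcomplex : ∀ ℓ : L, tH (tL ℓ) = 1)
    (hLnormal : tL.range.Normal) (hHnormal : tH.range.Normal)
    -- G-equivariance of the Peiffer lifting
    (hequivar : ∀ (g : G) (h₁ h₂ : H), actL g (br h₁ h₂) = br (actH g h₁) (actH g h₂))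
    -- (i)
    (hi₁ : ∀ (g : G) (ℓ : L), tL (actL g ℓ) = actH g (tL ℓ))
    (hi₂ : ∀ (g : G) (h : H), tH (actH g h) = g * tH h * g⁻¹)
    -- (ii)
    (hii : ∀ h₁ h₂ : H, tL (br h₁ h₂) = (h₁ * h₂ * h₁⁻¹) * actH (tH h₁) h₂⁻¹)
    -- (iii)
    (hiii : ∀ ℓ₁ ℓ₂ : L, br (tL ℓ₁) (tL ℓ₂) = ℓ₁ * ℓ₂ * ℓ₁⁻¹ * ℓ₂⁻¹)
    -- (iv)
    (hiv : ∀ h₁ h₂ h₃ : H, br (h₁ * h₂) h₃ = br h₁ (h₂ * h₃ * h₂⁻¹) * actL (tH h₁) (br h₂ h₃))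
    -- (v)
    (hv : ∀ h₁ h₂ h₃ : H,
      br h₁ (h₂ * h₃) = br h₁ h₂ * br h₁ h₃ * br (tL (br h₁ h₃))⁻¹ (actH (tH h₁) h₂))
    -- (vi)
    (hvi : ∀ (h : H) (ℓ : L), br h (tL ℓ) = (br (tL ℓ) h)⁻¹ * ℓ * actL (tH h) ℓ⁻¹) :
    -- `(L → H, ▷)` with `h ▷ ℓ := ℓ * br (tL ℓ)⁻¹ h` is a crossed module of groups:
    (∀ ℓ : L, ℓ * br (tL ℓ)⁻¹ (1 : H) = ℓ) ∧
    (∀ (h₁ h₂ : H) (ℓ : L),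
      ℓ * br (tL ℓ)⁻¹ (h₁ * h₂)
        = (ℓ * br (tL ℓ)⁻¹ h₂) * br (tL (ℓ * br (tL ℓ)⁻¹ h₂))⁻¹ h₁) ∧
    (∀ (h : H) (ℓ₁ ℓ₂ : L),
      (ℓ₁ * ℓ₂) * br (tL (ℓ₁ * ℓ₂))⁻¹ h
        = (ℓ₁ * br (tL ℓ₁)⁻¹ h) * (ℓ₂ * br (tL ℓ₂)⁻¹ h)) ∧
    -- equivariance of `t : L → H`:
    (∀ (h : H) (ℓ : L), tL (ℓ * br (tL ℓ)⁻¹ h) = h * tL ℓ * h⁻¹) ∧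
    -- Peiffer identity for the induced action:
    (∀ ℓ₁ ℓ₂ : L, ℓ₂ * br (tL ℓ₂)⁻¹ (tL ℓ₁) = ℓ₁ * ℓ₂ * ℓ₁⁻¹) := by

  have actH1 : ∀ h : H, actH 1 h = h := fun h => by rw [map_one]; rfl
  have actL1 : ∀ l : L, actL 1 l = l := fun l => by rw [map_one]; rfl
  have actL_tL_inv : ∀ (x l : L), actL (tH (tL x)⁻¹) l = l := fun x l => by
    rw [map_inv, hcomplex, inv_one, actL1]
  have actH_tL_inv : ∀ (x : L) (h : H), actH (tH (tL x)⁻¹) h = h := fun x h => by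
    rw [map_inv, hcomplex, inv_one, actH1]
  have br_one_left : ∀ h : H, br 1 h = 1 := by
    intro h
    have h1 := hiv 1 1 h
    simp only [one_mul, inv_one, mul_one, map_one, MulAut.one_apply] at h1
    exact (left_eq_mul.mp h1)
  have br_tL_tL : ∀ x y : L, br (tL x)⁻¹ (tL y) = x⁻¹ * y * x * y⁻¹ := by
    intro x y
    rw [← map_inv, hiii]
    group
  have tl_br : ∀ (x : L) (h : H), tL (br (tL x)⁻¹ h) = (tL x)⁻¹ * h * tL x * h⁻¹ := by
    intro x h
    have h1 := hii (tL x)⁻¹ h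
    rw [actH_tL_inv] at h1
    rw [h1]; group
  have br_one_right : ∀ h : H, br h 1 = 1 := by
    intro h
    have ht : tL (br h 1) = 1 := by
      have h1 := hii h 1
      simpa using h1
    have h1 := hv h 1 1
    rw [mul_one, ht, inv_one, map_one, br_one_left, mul_one] at h1
    exact left_eq_mul.mp h1
  have key : ∀ (k u : L) (h : H),
      br (tL k)⁻¹ (tL u * h) = k⁻¹ * u * k * (br (tL k)⁻¹ h) * u⁻¹ := by
    intro k u h
    have h1 := hv (tL k)⁻¹ (tL u) h
    rw [actH_tL_inv, br_tL_tL, br_tL_tL] at h1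
    rw [h1]; group
  refine ⟨?_, ?_, ?_, ?_, ?_⟩
  · intro ℓ
    rw [br_one_right, mul_one]
  · intro h₁ h₂ ℓ
    have e1 : (tL (ℓ * br (tL ℓ)⁻¹ h₂))⁻¹ = (tL (br (tL ℓ)⁻¹ h₂))⁻¹ * (tL ℓ)⁻¹ := by
      rw [map_mul, mul_inv_rev]
    have e2 : (tL ℓ)⁻¹ * h₁ * ((tL ℓ)⁻¹)⁻¹ = tL (br (tL ℓ)⁻¹ h₁) * h₁ := by
      rw [tl_br]; group
    rw [e1, hiv (tL (br (tL ℓ)⁻¹ h₂))⁻¹ (tL ℓ)⁻¹ h₁, actL_tL_inv, e2, key,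
      hv (tL ℓ)⁻¹ h₁ h₂, actH_tL_inv]
    group
  · intro h ℓ₁ ℓ₂
    have e1 : (tL (ℓ₁ * ℓ₂))⁻¹ = (tL ℓ₂)⁻¹ * (tL ℓ₁)⁻¹ := by
      rw [map_mul, mul_inv_rev]
    have e2 : (tL ℓ₁)⁻¹ * h * ((tL ℓ₁)⁻¹)⁻¹ = tL (br (tL ℓ₁)⁻¹ h) * h := by
      rw [tl_br]; group
    rw [e1, hiv (tL ℓ₂)⁻¹ (tL ℓ₁)⁻¹ h, actL_tL_inv, e2, key]
    group
  · intro h ℓ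
    rw [map_mul, tl_br]
    group
  · intro ℓ₁ ℓ₂
    rw [br_tL_tL]
    group
end

section
/- Let (H → G, ▷) be a crossed module of matrix Lie groups and (A, B) a local connective structure on an open set U ⊆ ℝⁿ, with fake curvature F := dA + ½[A,A] − t(B). Under a gauge transformation à = g⁻¹ A g + g⁻¹ dg − t(Λ), the fake curvature transforms as F̃ := dà + ½[Ã,Ã] − t(B̃) = g⁻¹ F g, where B̃ = g⁻¹ ▷ B − dΛ − Ã ▷ Λ − ½[Λ,Λ]. -/
noncomputable section

/-- Points of the base. -/
abbrev E (d : ℕ) := Fin d → ℝ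
/-- The matrix algebra `gl(n,ℝ)`, realized as continuous linear endomorphisms of `ℝⁿ`;
the matrix group `GL(n,ℝ)` sits inside it as the units. -/
abbrev Mat (n : ℕ) := (Fin n → ℝ) →L[ℝ] (Fin n → ℝ)

/-- Pointwise exterior derivative of a 1-form: `dA(x)(v,w) = ∂_v A(w) - ∂_w A(v)`. -/
def dOne {d n : ℕ} (A : E d → E d → Mat n) (x v w : E d) : Mat n :=
  fderiv ℝ (fun y => A y w) x v - fderiv ℝ (fun y => A y v) x w

/-- Fake curvature `F = dA + ½[A,A] - t(B)` evaluated pointwise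
(`½[A,A](v,w) = [A(v),A(w)]`). -/
def fakeCurv {d n : ℕ} (t : Mat n →ₗ[ℝ] Mat n) (A : E d → E d → Mat n)
    (B : E d → E d → E d → Mat n) (x v w : E d) : Mat n :=
  dOne A x v w + (A x v * A x w - A x w * A x v) - t (B x v w)

lemma fderiv_mul_apply' {d n : ℕ} {c e : E d → Mat n} {x : E d}
    (hc : DifferentiableAt ℝ c x) (he : DifferentiableAt ℝ e x) (v : E d) :
    fderiv ℝ (fun y => c y * e y) x v = fderiv ℝ c x v * e x + c x * fderiv ℝ e x v := by
  rw [fderiv_fun_mul' hc he]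
  simp only [ContinuousLinearMap.add_apply, ContinuousLinearMap.smul_apply,
    ContinuousLinearMap.smulRight_apply, smul_eq_mul]
  rw [add_comm]
  rw [op_smul_eq_mul]


lemma key_ring_identity {R : Type*} [Ring R]
    (p q av aw Gv Gw lv lw tv tw dAvw dAwv tdLvw tdLwv S tB : R)
    (hpq : p * q = 1) (hpf : tv * tw - tw * tv = lv * tw - tw * lv) :
    ((-(q * Gv * q) * aw * p + q * dAvw * p + q * aw * Gv + -(q * Gv * q) * Gw + q * S - tdLvw)
      - (-(q * Gw * q) * av * p + q * dAwv * p + q * av * Gw + -(q * Gw * q) * Gv + q * S - tdLwv))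
    + ((q * av * p + q * Gv - tv) * (q * aw * p + q * Gw - tw)
       - (q * aw * p + q * Gw - tw) * (q * av * p + q * Gv - tv))
    - (q * tB * p - (tdLvw - tdLwv)
       - (((q * av * p + q * Gv - tv) * tw - tw * (q * av * p + q * Gv - tv))
          - ((q * aw * p + q * Gw - tw) * tv - tv * (q * aw * p + q * Gw - tw)))
       - (lv * tw - tw * lv))
    = q * (dAvw - dAwv + (av * aw - aw * av) - tB) * p := by
  calc
    ((-(q * Gv * q) * aw * p + q * dAvw * p + q * aw * Gv + -(q * Gv * q) * Gw + q * S - tdLvw)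
      - (-(q * Gw * q) * av * p + q * dAwv * p + q * av * Gw + -(q * Gw * q) * Gv + q * S - tdLwv))
    + ((q * av * p + q * Gv - tv) * (q * aw * p + q * Gw - tw)
       - (q * aw * p + q * Gw - tw) * (q * av * p + q * Gv - tv))
    - (q * tB * p - (tdLvw - tdLwv)
       - (((q * av * p + q * Gv - tv) * tw - tw * (q * av * p + q * Gv - tv))
          - ((q * aw * p + q * Gw - tw) * tv - tv * (q * aw * p + q * Gw - tw)))
       - (lv * tw - tw * lv))
      = q * (dAvw - dAwv + (av * aw - aw * av) - tB) * p
        + (q * av * (p * q - 1) * aw * p + q * av * (p * q - 1) * Gw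
           - q * aw * (p * q - 1) * av * p - q * aw * (p * q - 1) * Gv
           - ((tv * tw - tw * tv) - (lv * tw - tw * lv))) := by noncomm_ring
    _ = q * (dAvw - dAwv + (av * aw - aw * av) - tB) * p := by
        rw [hpq, hpf]; noncomm_ring

set_option maxHeartbeats 1600000 in
/-- Under a gauge transformation
`Ã = g⁻¹ A g + g⁻¹ dg - t(Λ)`, `B̃ = g⁻¹ ▷ B - dΛ - Ã ▷ Λ - ½[Λ,Λ]`,
the fake curvature transforms as `F̃ = g⁻¹ F g`. -/
theorem fake_curvature_gauge_transformation
    {d n : ℕ} (U : Set (E d)) (hU : IsOpen U)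
    (t : Mat n →ₗ[ℝ] Mat n)
    -- differentiated crossed module structure, with `▷ = ad` and conjugation action:
    (ht_equiv : ∀ a b : Mat n, t (a * b - b * a) = a * t b - t b * a)
    (ht_peiffer : ∀ a b : Mat n, t a * b - b * t a = a * b - b * a)
    (A At Λ : E d → E d → Mat n) (B Bt : E d → E d → E d → Mat n)
    (g g' : E d → Mat n)
    (hg_inv : ∀ x ∈ U, g x * g' x = 1 ∧ g' x * g x = 1)
    (hg_sm : ContDiffOn ℝ 2 g U) (hg'_sm : ContDiffOn ℝ 2 g' U)
    (hA_sm : ∀ v, ContDiffOn ℝ 1 (fun x => A x v) U)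
    (hΛ_sm : ∀ v, ContDiffOn ℝ 1 (fun x => Λ x v) U)
    (ht_gequiv : ∀ x ∈ U, ∀ c : Mat n, t (g' x * c * g x) = g' x * t c * g x)
    -- the gauge-transformed connective structure:
    (hAt : ∀ x ∈ U, ∀ v, At x v = g' x * A x v * g x + g' x * fderiv ℝ g x v - t (Λ x v))
    (hBt : ∀ x ∈ U, ∀ v w, Bt x v w =
      g' x * B x v w * g x
      - (fderiv ℝ (fun y => Λ y w) x v - fderiv ℝ (fun y => Λ y v) x w)
      - ((At x v * Λ x w - Λ x w * At x v) - (At x w * Λ x v - Λ x v * At x w))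
      - (Λ x v * Λ x w - Λ x w * Λ x v)) :
    ∀ x ∈ U, ∀ v w, fakeCurv t At Bt x v w = g' x * fakeCurv t A B x v w * g x := by

  intro x hx v w
  have hmem : U ∈ nhds x := hU.mem_nhds hx
  obtain ⟨hgg', hg'g⟩ := hg_inv x hx
  -- basic differentiability at x
  have hgd : DifferentiableAt ℝ g x :=
    (hg_sm.differentiableOn two_ne_zero).differentiableAt hmem
  have hg'd : DifferentiableAt ℝ g' x :=
    (hg'_sm.differentiableOn two_ne_zero).differentiableAt hmem
  have hAd : ∀ u, DifferentiableAt ℝ (fun y => A y u) x := fun u =>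
    ((hA_sm u).differentiableOn one_ne_zero).differentiableAt hmem
  have hΛd : ∀ u, DifferentiableAt ℝ (fun y => Λ y u) x := fun u =>
    ((hΛ_sm u).differentiableOn one_ne_zero).differentiableAt hmem
  have hdfg : DifferentiableAt ℝ (fderiv ℝ g) x :=
    ((hg_sm.fderiv_of_isOpen hU (by norm_num)).differentiableOn one_ne_zero).differentiableAt hmem
  have hdfb : ∀ b, DifferentiableAt ℝ (fun y => fderiv ℝ g y b) x := fun b =>
    hdfg.clm_apply (differentiableAt_const b)
  -- derivative of t ∘ (Λ · b)
  have hTf : ∀ (f : E d → Mat n), DifferentiableAt ℝ f x → ∀ a : E d,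
      DifferentiableAt ℝ (fun y => t (f y)) x ∧
      fderiv ℝ (fun y => t (f y)) x a = t (fderiv ℝ f x a) := by
    intro f hf a
    have hT0 := (LinearMap.toContinuousLinearMap t).hasFDerivAt
      (x := f x) |>.comp x hf.hasFDerivAt
    have hT : HasFDerivAt (fun y => t (f y))
        ((LinearMap.toContinuousLinearMap t).comp (fderiv ℝ f x)) x := by
      simpa [Function.comp_def] using hT0
    refine ⟨hT.differentiableAt, ?_⟩
    rw [hT.fderiv]
    simp
  -- derivative of g'
  have hGpv : ∀ u, fderiv ℝ g' x u = -(g' x * fderiv ℝ g x u * g' x) := by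
    intro u
    have h0 : (fun y => g y * g' y) =ᶠ[nhds x] fun _ => (1 : Mat n) :=
      Filter.eventuallyEq_of_mem hmem fun y hy => (hg_inv y hy).1
    have h1 : fderiv ℝ (fun y => g y * g' y) x u = 0 := by
      rw [h0.fderiv_eq]; simp
    have h2 : fderiv ℝ g x u * g' x + g x * fderiv ℝ g' x u = 0 := by
      rw [← fderiv_mul_apply' hgd hg'd u]; exact h1
    have h3 : g x * fderiv ℝ g' x u = -(fderiv ℝ g x u * g' x) :=
      eq_neg_of_add_eq_zero_right h2
    calc fderiv ℝ g' x u = g' x * (g x * fderiv ℝ g' x u) := by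
          rw [← mul_assoc, hg'g, one_mul]
      _ = -(g' x * fderiv ℝ g x u * g' x) := by rw [h3, mul_assoc]; exact mul_neg (g' x) (fderiv ℝ g x u * g' x)
  -- symmetry of the second derivative of g
  have hsecond : ∀ a b : E d, fderiv ℝ (fun y => fderiv ℝ g y b) x a =
      fderiv ℝ (fderiv ℝ g) x a b := by
    intro a b
    rw [fderiv_clm_apply hdfg (differentiableAt_const b)]
    simp
  have hsymm : fderiv ℝ (fun y => fderiv ℝ g y w) x v =
      fderiv ℝ (fun y => fderiv ℝ g y v) x w := by
    rw [hsecond v w, hsecond w v]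
    have hev : ∀ᶠ y in nhds x, HasFDerivAt g (fderiv ℝ g y) y :=
      Filter.eventually_of_mem hmem fun y hy =>
        ((hg_sm.differentiableOn two_ne_zero).differentiableAt (hU.mem_nhds hy)).hasFDerivAt
    exact second_derivative_symmetric_of_eventually_of_real hev hdfg.hasFDerivAt v w
  -- the derivative of the gauge-transformed connection
  have hDAt : ∀ a b : E d, fderiv ℝ (fun y => At y b) x a =
      -(g' x * fderiv ℝ g x a * g' x) * A x b * g x
      + g' x * fderiv ℝ (fun y => A y b) x a * g x
      + g' x * A x b * fderiv ℝ g x a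
      + -(g' x * fderiv ℝ g x a * g' x) * fderiv ℝ g x b
      + g' x * fderiv ℝ (fun y => fderiv ℝ g y b) x a
      - t (fderiv ℝ (fun y => Λ y b) x a) := by
    intro a b
    have h1 : DifferentiableAt ℝ (fun y => g' y * A y b) x := hg'd.mul (hAd b)
    have h2 : DifferentiableAt ℝ (fun y => (g' y * A y b) * g y) x := h1.mul hgd
    have h3 : DifferentiableAt ℝ (fun y => g' y * fderiv ℝ g y b) x := hg'd.mul (hdfb b)
    have h4 : DifferentiableAt ℝ (fun y => t (Λ y b)) x := (hTf _ (hΛd b) a).1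
    have heq : fderiv ℝ (fun y => At y b) x =
        fderiv ℝ (fun y => g' y * A y b * g y + g' y * fderiv ℝ g y b - t (Λ y b)) x :=
      Filter.EventuallyEq.fderiv_eq
        (Filter.eventuallyEq_of_mem hmem fun y hy => hAt y hy b)
    rw [heq, fderiv_fun_sub (h2.fun_add h3) h4, ContinuousLinearMap.sub_apply,
      fderiv_fun_add h2 h3, ContinuousLinearMap.add_apply,
      fderiv_mul_apply' h1 hgd, fderiv_mul_apply' hg'd (hAd b),
      fderiv_mul_apply' hg'd (hdfb b), (hTf _ (hΛd b) a).2, hGpv a]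
    noncomm_ring
  -- now assemble everything
  simp only [fakeCurv, dOne]
  rw [hDAt v w, hDAt w v, hsymm, hBt x hx v w]
  rw [map_sub, map_sub, map_sub, map_sub, map_sub, ht_gequiv x hx, ht_equiv, ht_equiv, ht_equiv]
  rw [hAt x hx v, hAt x hx w]
  refine Eq.trans ?_ (key_ring_identity (g x) (g' x) (A x v) (A x w)
    (fderiv ℝ g x v) (fderiv ℝ g x w) (Λ x v) (Λ x w) (t (Λ x v)) (t (Λ x w))
    (fderiv ℝ (fun y => A y w) x v) (fderiv ℝ (fun y => A y v) x w)
    (t (fderiv ℝ (fun y => Λ y w) x v)) (t (fderiv ℝ (fun y => Λ y v) x w))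
    (fderiv ℝ (fun y => fderiv ℝ g y v) x w) (t (B x v w))
    hgg' (ht_peiffer (Λ x v) (t (Λ x w))))
  noncomm_ring


end
end

section
/- In an associative 2-term A∞-algebra A = A₋₁ ⊕ A₀ (graded vector space with m₁ : A → A of degree 1 a differential, m₂ : A ⊗ A → A of degree 0 associative, and m₁ a derivation of m₂), the antisymmetrizations μ₁ := m₁ and μ₂(a,b) := m₂(a,b) − (−1)^{|a||b|} m₂(b,a) define a 2-term L∞-algebra; equivalently, setting g := A₀, h := A₋₁, t := m₁|_h, [x,y] := μ₂(x,y) for x,y ∈ g, x ▷ χ := μ₂(x,χ) for x ∈ g, χ ∈ h, and [χ₁,χ₂] := μ₂(m₁(χ₁), χ₂), one obtains a crossed module of Lie algebras: t is a Lie algebra homomorphism, ▷ is an action by derivations, t(x ▷ χ) = [x, t(χ)], and t(χ₁) ▷ χ₂ = [χ₁, χ₂]. -/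
noncomputable section

variable {k A₀ A₁ : Type*} [Field k] [CharZero k]
  [AddCommGroup A₀] [Module k A₀] [AddCommGroup A₁] [Module k A₁]

/-- Antisymmetrized bracket on `A₀` (degree 0 part, `g`). -/
def br0 (p00 : A₀ →ₗ[k] A₀ →ₗ[k] A₀) (x y : A₀) : A₀ := p00 x y - p00 y x

/-- Antisymmetrized action of `A₀` on `A₋₁` (here denoted `A₁`): `x ▷ χ = μ₂(x,χ)`. -/
def actOn (p01 : A₀ →ₗ[k] A₁ →ₗ[k] A₁) (p10 : A₁ →ₗ[k] A₀ →ₗ[k] A₁)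
    (x : A₀) (χ : A₁) : A₁ := p01 x χ - p10 χ x

/-- Induced bracket on `A₋₁`: `[χ₁,χ₂] := μ₂(m₁ χ₁, χ₂)`. -/
def brh (m1 : A₁ →ₗ[k] A₀) (p01 : A₀ →ₗ[k] A₁ →ₗ[k] A₁) (p10 : A₁ →ₗ[k] A₀ →ₗ[k] A₁)
    (χ₁ χ₂ : A₁) : A₁ := actOn p01 p10 (m1 χ₁) χ₂

/-- the antisymmetrization of an associative 2-term A∞-algebra
`A = A₋₁ ⊕ A₀` yields a 2-term L∞-algebra, equivalently a crossed module of Lie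
algebras `(h := A₋₁ → g := A₀, ▷)`. -/
theorem two_term_Ainfty_gives_crossed_module
    (m1 : A₁ →ₗ[k] A₀)
    (p00 : A₀ →ₗ[k] A₀ →ₗ[k] A₀) (p01 : A₀ →ₗ[k] A₁ →ₗ[k] A₁)
    (p10 : A₁ →ₗ[k] A₀ →ₗ[k] A₁)
    -- `m₁` is a derivation of `m₂` (graded Leibniz; `m₂` vanishes on `A₋₁ ⊗ A₋₁`):
    (hder01 : ∀ (x : A₀) (χ : A₁), m1 (p01 x χ) = p00 x (m1 χ))
    (hder10 : ∀ (χ : A₁) (x : A₀), m1 (p10 χ x) = p00 (m1 χ) x)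
    (hder11 : ∀ χ₁ χ₂ : A₁, p01 (m1 χ₁) χ₂ = p10 χ₁ (m1 χ₂))
    -- associativity of `m₂` on all triples:
    (hassoc000 : ∀ x y z : A₀, p00 (p00 x y) z = p00 x (p00 y z))
    (hassoc001 : ∀ (x y : A₀) (χ : A₁), p01 (p00 x y) χ = p01 x (p01 y χ))
    (hassoc010 : ∀ (x : A₀) (χ : A₁) (y : A₀), p10 (p01 x χ) y = p01 x (p10 χ y))
    (hassoc100 : ∀ (χ : A₁) (x y : A₀), p10 (p10 χ x) y = p10 χ (p00 x y)) :
    -- `g = A₀` is a Lie algebra under `μ₂`: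
    (∀ x : A₀, br0 p00 x x = 0) ∧
    (∀ x y z : A₀,
      br0 p00 x (br0 p00 y z) + br0 p00 y (br0 p00 z x) + br0 p00 z (br0 p00 x y) = 0) ∧
    -- `h = A₋₁` is a Lie algebra under the induced bracket:
    (∀ χ : A₁, brh m1 p01 p10 χ χ = 0) ∧
    (∀ χ₁ χ₂ χ₃ : A₁,
      brh m1 p01 p10 χ₁ (brh m1 p01 p10 χ₂ χ₃)
        + brh m1 p01 p10 χ₂ (brh m1 p01 p10 χ₃ χ₁)
        + brh m1 p01 p10 χ₃ (brh m1 p01 p10 χ₁ χ₂) = 0) ∧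
    -- `t := m₁` is a Lie algebra homomorphism:
    (∀ χ₁ χ₂ : A₁, m1 (brh m1 p01 p10 χ₁ χ₂) = br0 p00 (m1 χ₁) (m1 χ₂)) ∧
    -- `▷` is an action by derivations:
    (∀ (x : A₀) (χ₁ χ₂ : A₁),
      actOn p01 p10 x (brh m1 p01 p10 χ₁ χ₂)
        = brh m1 p01 p10 (actOn p01 p10 x χ₁) χ₂
          + brh m1 p01 p10 χ₁ (actOn p01 p10 x χ₂)) ∧
    (∀ (x y : A₀) (χ : A₁),
      actOn p01 p10 (br0 p00 x y) χ
        = actOn p01 p10 x (actOn p01 p10 y χ) - actOn p01 p10 y (actOn p01 p10 x χ)) ∧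
    -- equivariance `t(x ▷ χ) = [x, t χ]`:
    (∀ (x : A₀) (χ : A₁), m1 (actOn p01 p10 x χ) = br0 p00 x (m1 χ)) ∧
    -- Peiffer identity `t(χ₁) ▷ χ₂ = [χ₁, χ₂]`:
    (∀ χ₁ χ₂ : A₁, actOn p01 p10 (m1 χ₁) χ₂ = brh m1 p01 p10 χ₁ χ₂) := by
  refine ⟨?_, ?_, ?_, ?_, ?_, ?_, ?_, ?_, ?_⟩ <;>
    intros <;>
    simp only [br0, actOn, brh, map_sub, map_add, LinearMap.sub_apply, LinearMap.add_apply,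
      hder01, hder10, hder11, hassoc000, hassoc001, hassoc010, hassoc100] <;>
    abel

end
end
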